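/- The generating function of the shifted unicellular LLT polynomials of path graphs satisfies Σ_{n ≥ 0} G_{P_n}(x; q+1) z^n = 1 / (1 - Σ_{i ≥ 1} q^{i-1} e_i(x) z^i). -/

import Mathlib

open Finset Polynomial

/-- The shifted unicellular LLT polynomial `G_{P_n}(x; q+1)` of the path `P_n`
(edges `i → i+1`), truncated to `m` variables: the sum over all colorings `F` of
`(q+1)^{asc F} x^F`, with coefficients in `ℚ[q]`. -/
noncomputable def pathLLTShifted (m n : ℕ) : MvPolynomial (Fin m) (Polynomial ℚ) :=
  ∑ F : Fin n → Fin m,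
    MvPolynomial.C ((Polynomial.X + 1 : Polynomial ℚ) ^
      ((Finset.univ.filter (fun p : Fin n × Fin n =>
          (p.1 : ℕ) + 1 = (p.2 : ℕ) ∧ F p.1 < F p.2)).card)) *
      ∏ v : Fin n, MvPolynomial.X (F v)


/-- successor with wraparound -/
def nxt {n : ℕ} (j : Fin n) : Fin n := ⟨((j:ℕ)+1) % n, Nat.mod_lt _ j.pos⟩

noncomputable def wt (m : ℕ) {n : ℕ} (G : Fin n → Fin m × Bool) :
    MvPolynomial (Fin m) (Polynomial ℚ) :=
  ∏ j : Fin n, (MvPolynomial.X (G j).1 *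
    (if (G j).2 then
      (if ((j:ℕ)+1 < n ∧ (G j).1 < (G (nxt j)).1) then MvPolynomial.C Polynomial.X else 0)
     else 1))

lemma wt_cons (m n : ℕ) (a : Fin m × Bool) (G' : Fin n → Fin m × Bool) :
    wt m (Fin.cons a G') = MvPolynomial.X a.1 *
      (if a.2 then
        (if h : 0 < n then
          (if a.1 < (G' ⟨0, h⟩).1 then MvPolynomial.C Polynomial.X else 0)
         else 0)
       else 1) * wt m G' := by
  rw [wt, Fin.prod_univ_succ, wt]
  refine congrArg₂ (· * ·) ?_ ?_
  · -- the factor at 0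
    rw [Fin.cons_zero]
    congr 1
    rcases Nat.eq_zero_or_pos n with h0 | h0
    · subst h0
      simp
    · have h1 : nxt (0 : Fin (n+1)) = Fin.succ ⟨0, h0⟩ := by
        apply Fin.ext
        simp [nxt, Nat.mod_eq_of_lt (by omega : 1 < n + 1)]
      rw [dif_pos h0]
      have hC0 : ((↑(0 : Fin (n+1)):ℕ) + 1 < n + 1 ∧ a.1 < ((Fin.cons a G' : Fin (n+1) → Fin m × Bool) (nxt 0)).1)
          ↔ (a.1 < (G' ⟨0, h0⟩).1) := by
        rw [h1, Fin.cons_succ]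
        simp [h0]
      exact if_congr Iff.rfl (if_congr hC0 rfl rfl) rfl
  · -- the rest
    apply Finset.prod_congr rfl
    intro j _
    rw [Fin.cons_succ]
    congr 1
    have hC : ((↑(Fin.succ j) : ℕ) + 1 < n + 1 ∧ (G' j).1 < ((Fin.cons a G' : Fin (n+1) → Fin m × Bool) (nxt (Fin.succ j))).1)
        ↔ ((j:ℕ) + 1 < n ∧ (G' j).1 < (G' (nxt j)).1) := by
      by_cases h : (j:ℕ) + 1 < n
      · have h1 : nxt (Fin.succ j) = Fin.succ (nxt j) := by
          apply Fin.ext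
          simp [nxt, Fin.val_succ, Nat.mod_eq_of_lt (by omega : (j:ℕ)+1+1 < n+1),
            Nat.mod_eq_of_lt h]
        rw [h1, Fin.cons_succ]
        constructor <;> rintro ⟨h', hp⟩
        · exact ⟨h, hp⟩
        · exact ⟨by simp [Fin.val_succ]; omega, hp⟩
      · refine iff_of_false (fun ⟨h', _⟩ => h ?_) (fun ⟨h', _⟩ => h h')
        simp [Fin.val_succ] at h'
        omega
    exact if_congr Iff.rfl (if_congr hC rfl rfl) rfl


lemma min_split {ι R : Type*} [LinearOrder ι] [DecidableEq ι] [CommSemiring R]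
    (s : Finset ι) (k : ℕ) (f : ι → R) :
    ∑ T ∈ s.powersetCard (k+1), ∏ d ∈ T, f d
      = ∑ c ∈ s, f c * ∑ T ∈ ((s.filter (fun d => c < d)).powersetCard k), ∏ d ∈ T, f d := by
  have key : ∀ c ∈ s, f c * ∑ T ∈ ((s.filter (fun d => c < d)).powersetCard k), ∏ d ∈ T, f d
      = ∑ T ∈ ((s.filter (fun d => c < d)).powersetCard k), f c * ∏ d ∈ T, f d := by
    intro c _; rw [Finset.mul_sum]
  rw [Finset.sum_congr rfl key, Finset.sum_sigma' s _ (fun c T => f c * ∏ d ∈ T, f d)]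
  have hne : ∀ T ∈ s.powersetCard (k+1), T.Nonempty := by
    intro T hT
    rw [Finset.mem_powersetCard] at hT
    exact Finset.card_pos.mp (by omega)
  refine (Finset.sum_bij'
    (fun T hT => (⟨T.min' (hne T hT), T.erase (T.min' (hne T hT))⟩ : (_ : ι) × Finset ι))
    (fun p _ => insert p.1 p.2) ?hi ?hj ?hij ?hji ?hw)
  case hi =>
    intro T hT
    have h := Finset.mem_powersetCard.mp hT
    rw [Finset.mem_sigma, Finset.mem_powersetCard]
    refine ⟨h.1 (T.min'_mem (hne T hT)), ?_, ?_⟩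
    · intro x hx
      exact Finset.mem_filter.mpr ⟨h.1 (Finset.mem_of_mem_erase hx),
        Finset.min'_lt_of_mem_erase_min' T (hne T hT) hx⟩
    · rw [Finset.card_erase_of_mem (T.min'_mem (hne T hT)), h.2]; omega
  case hj =>
    intro p hp
    rw [Finset.mem_sigma, Finset.mem_powersetCard] at hp
    obtain ⟨hc, hTs, hcard⟩ := hp
    have hns : p.1 ∉ p.2 := fun h => lt_irrefl p.1 (Finset.mem_filter.mp (hTs h)).2
    rw [Finset.mem_powersetCard]
    constructor
    · intro x hx
      rcases Finset.mem_insert.mp hx with h | h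
      · exact h ▸ hc
      · exact (Finset.mem_filter.mp (hTs h)).1
    · rw [Finset.card_insert_of_notMem hns, hcard]
  case hij =>
    intro T hT
    exact Finset.insert_erase (T.min'_mem (hne T hT))
  case hji =>
    intro p hp
    rw [Finset.mem_sigma, Finset.mem_powersetCard] at hp
    obtain ⟨hc, hTs, hcard⟩ := hp
    have hns : p.1 ∉ p.2 := fun h => lt_irrefl p.1 (Finset.mem_filter.mp (hTs h)).2
    have hmem : p.1 ∈ insert p.1 p.2 := Finset.mem_insert_self _ _
    have hmin : ∀ hne', (insert p.1 p.2).min' hne' = p.1 := by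
      intro hne'
      apply le_antisymm
      · exact Finset.min'_le _ _ hmem
      · apply Finset.le_min'
        intro y hy
        rcases Finset.mem_insert.mp hy with h | h
        · exact h.ge
        · exact (Finset.mem_filter.mp (hTs h)).2.le
    refine Sigma.ext (by simp [hmin]) ?_
    simp only [hmin]
    rw [Finset.erase_insert hns]
  case hw =>
    intro T hT
    have h := Finset.mem_powersetCard.mp hT
    exact (Finset.mul_prod_erase T f (T.min'_mem (hne T hT))).symm

noncomputable def Hs (m n : ℕ) : MvPolynomial (Fin m) (Polynomial ℚ) :=
  ∑ G : Fin n → Fin m × Bool, wt m G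

noncomputable def Ds (m n : ℕ) (c : Fin m) : MvPolynomial (Fin m) (Polynomial ℚ) :=
  ∑ G : Fin (n+1) → Fin m × Bool, if c < (G 0).1 then wt m G else 0

lemma peel (m n : ℕ) (f : (Fin (n+1) → Fin m × Bool) → MvPolynomial (Fin m) (Polynomial ℚ)) :
    ∑ G : Fin (n+1) → Fin m × Bool, f G
      = ∑ a : Fin m × Bool, ∑ G' : Fin n → Fin m × Bool, f (Fin.cons a G') := by
  rw [show (∑ G : Fin (n+1) → Fin m × Bool, f G)
      = ∑ p : (Fin m × Bool) × (Fin n → Fin m × Bool), f (Fin.cons p.1 p.2) from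
    (Fintype.sum_equiv (Fin.consEquiv (fun _ => Fin m × Bool)) _ _ (fun p => rfl)).symm,
    Fintype.sum_prod_type]

lemma sum_cons (m n : ℕ) (a : Fin m × Bool) :
    ∑ G' : Fin (n+1) → Fin m × Bool, wt m (Fin.cons a G')
      = MvPolynomial.X a.1 *
        (if a.2 then MvPolynomial.C Polynomial.X * Ds m n a.1 else Hs m (n+1)) := by
  have h0 : (0 : ℕ) < n + 1 := Nat.succ_pos n
  simp only [wt_cons, dif_pos h0]
  rcases a with ⟨c, b⟩
  cases b
  · simp only [if_neg (Bool.false_ne_true), mul_one, ← Finset.mul_sum]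
    rfl
  · simp only [if_pos rfl, if_true]
    have key : ∀ G' : Fin (n+1) → Fin m × Bool,
        (if c < (G' ⟨0, h0⟩).1 then MvPolynomial.C Polynomial.X else 0) * wt m G'
          = MvPolynomial.C Polynomial.X * (if c < (G' 0).1 then wt m G' else 0) := by
      intro G'
      have : (⟨0, h0⟩ : Fin (n+1)) = 0 := rfl
      rw [this]
      split <;> simp
    simp only [mul_assoc, key, ← Finset.mul_sum]
    rfl

lemma Hs_succ (m n : ℕ) :
    Hs m (n+2) = ∑ c : Fin m, MvPolynomial.X c *
      (Hs m (n+1) + MvPolynomial.C Polynomial.X * Ds m n c) := by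
  rw [Hs, peel]
  simp only [sum_cons]
  rw [Fintype.sum_prod_type]
  apply Finset.sum_congr rfl
  intro c _
  rw [Fintype.sum_bool]
  simp only [if_pos rfl, if_true, if_neg (Bool.false_ne_true)]
  ring

lemma Ds_succ (m n : ℕ) (c' : Fin m) :
    Ds m (n+1) c' = ∑ c ∈ univ.filter (fun d => c' < d), MvPolynomial.X c *
      (Hs m (n+1) + MvPolynomial.C Polynomial.X * Ds m n c) := by
  rw [Ds, peel]
  have key : ∀ a : Fin m × Bool,
      (∑ G' : Fin (n+1) → Fin m × Bool,
        if c' < ((Fin.cons a G' : Fin (n+2) → Fin m × Bool) 0).1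
        then wt m (Fin.cons a G') else 0)
      = if c' < a.1 then MvPolynomial.X a.1 *
          (if a.2 then MvPolynomial.C Polynomial.X * Ds m n a.1 else Hs m (n+1)) else 0 := by
    intro a
    simp only [Fin.cons_zero]
    split
    · exact sum_cons m n a
    · exact Finset.sum_const_zero
  simp only [key]
  rw [Fintype.sum_prod_type]
  have key2 : ∀ c : Fin m,
      (∑ y : Bool, if c' < c then MvPolynomial.X c *
          (if y = true then MvPolynomial.C Polynomial.X * Ds m n c else Hs m (n+1)) else 0)
      = if c' < c then MvPolynomial.X c *
          (Hs m (n+1) + MvPolynomial.C Polynomial.X * Ds m n c) else 0 := by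
    intro c
    rw [Fintype.sum_bool]
    split
    · simp only [if_pos rfl, if_true, if_neg (Bool.false_ne_true)]
      ring
    · simp
  simp only [key2]
  rw [Finset.sum_filter]

lemma sum_empty_fun (m : ℕ) (f : (Fin 0 → Fin m × Bool) → MvPolynomial (Fin m) (Polynomial ℚ))
    (c : MvPolynomial (Fin m) (Polynomial ℚ)) (h : ∀ G, f G = c) :
    ∑ G : Fin 0 → Fin m × Bool, f G = c := by
  simp only [h]
  rw [Finset.sum_const]
  simp

lemma Hs_zero (m : ℕ) : Hs m 0 = 1 := by
  rw [Hs]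
  exact sum_empty_fun m _ _ (fun G => by simp [wt])

lemma Hs_one (m : ℕ) : Hs m 1 = ∑ c : Fin m, MvPolynomial.X c := by
  rw [Hs, peel m 0]
  have key : ∀ a : Fin m × Bool,
      (∑ G' : Fin 0 → Fin m × Bool, wt m (Fin.cons a G'))
        = MvPolynomial.X a.1 * (if a.2 then 0 else 1) := by
    intro a
    refine sum_empty_fun m _ _ (fun G' => ?_)
    rw [wt_cons]
    simp [wt]
  simp only [key]
  rw [Fintype.sum_prod_type]
  apply Finset.sum_congr rfl
  intro c _
  rw [Fintype.sum_bool]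
  simp

lemma Ds_zero (m : ℕ) (c : Fin m) :
    Ds m 0 c = ∑ c' ∈ univ.filter (fun d => c < d), MvPolynomial.X c' := by
  rw [Ds, peel m 0]
  have key : ∀ a : Fin m × Bool,
      (∑ G' : Fin 0 → Fin m × Bool,
        if c < ((Fin.cons a G' : Fin 1 → Fin m × Bool) 0).1
        then wt m (Fin.cons a G') else 0)
      = if c < a.1 then MvPolynomial.X a.1 * (if a.2 then 0 else 1) else 0 := by
    intro a
    refine sum_empty_fun m _ _ (fun G' => ?_)
    rw [Fin.cons_zero, wt_cons]
    simp [wt]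
  simp only [key]
  rw [Fintype.sum_prod_type]
  have key2 : ∀ c' : Fin m,
      (∑ y : Bool, if c < c' then MvPolynomial.X c' *
          (if y = true then (0 : MvPolynomial (Fin m) (Polynomial ℚ)) else 1) else 0)
      = if c < c' then MvPolynomial.X c' else 0 := by
    intro c'
    rw [Fintype.sum_bool]
    split <;> simp
  simp only [key2]
  rw [Finset.sum_filter]

noncomputable def Ek (m : ℕ) (k : ℕ) (c : Fin m) : MvPolynomial (Fin m) (Polynomial ℚ) :=
  ∑ T ∈ ((univ : Finset (Fin m)).filter (fun d => c < d)).powersetCard k,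
    ∏ d ∈ T, MvPolynomial.X d

lemma esymm_succ (m k : ℕ) :
    MvPolynomial.esymm (Fin m) (Polynomial ℚ) (k+1)
      = ∑ c : Fin m, MvPolynomial.X c * Ek m k c := by
  rw [MvPolynomial.esymm]
  exact min_split univ k _

lemma Ek_one (m : ℕ) (c : Fin m) :
    Ek m 1 c = ∑ c' ∈ univ.filter (fun d => c < d), MvPolynomial.X c' := by
  rw [Ek, min_split]
  apply Finset.sum_congr rfl
  intro c' _
  rw [Finset.powersetCard_zero]
  simp

lemma Ek_succ (m k : ℕ) (c' : Fin m) :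
    Ek m (k+1) c' = ∑ c ∈ univ.filter (fun d => c' < d), MvPolynomial.X c * Ek m k c := by
  rw [Ek, min_split]
  apply Finset.sum_congr rfl
  intro c hc
  rw [Finset.mem_filter] at hc
  have hset : (filter (fun d => c < d) (filter (fun d => c' < d) univ))
      = filter (fun d => c < d) univ := by
    rw [Finset.filter_filter]
    apply Finset.filter_congr
    intro d _
    constructor
    · exact fun h => h.2
    · exact fun h => ⟨lt_trans hc.2 h, h⟩
  rw [hset, Ek]

lemma main_ind (m n : ℕ) :
    (Hs m (n+1) = ∑ i ∈ range (n+1), MvPolynomial.C ((Polynomial.X : Polynomial ℚ) ^ i) *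
        MvPolynomial.esymm (Fin m) (Polynomial ℚ) (i+1) * Hs m (n-i))
    ∧ ∀ c, Ds m n c = ∑ i ∈ range (n+1), MvPolynomial.C ((Polynomial.X : Polynomial ℚ) ^ i) *
        Ek m (i+1) c * Hs m (n-i) := by
  induction n with
  | zero =>
    constructor
    · rw [Hs_one, Finset.sum_range_one]
      simp [Hs_zero, MvPolynomial.esymm_one]
    · intro c
      rw [Ds_zero, Finset.sum_range_one]
      simp [Ek_one, Hs_zero]
  | succ n ih =>
    obtain ⟨ihH, ihD⟩ := ih
    have piece2 : ∀ i ∈ range (n+1),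
        (∑ c : Fin m, MvPolynomial.X c * (MvPolynomial.C Polynomial.X *
          (MvPolynomial.C ((Polynomial.X : Polynomial ℚ) ^ i) * Ek m (i+1) c * Hs m (n-i))))
        = MvPolynomial.C ((Polynomial.X : Polynomial ℚ) ^ (i+1)) *
            MvPolynomial.esymm (Fin m) (Polynomial ℚ) (i+1+1) * Hs m (n+1-(i+1)) := by
      intro i _
      rw [Nat.succ_sub_succ, esymm_succ m (i+1), Finset.mul_sum, Finset.sum_mul]
      apply Finset.sum_congr rfl
      intro c _
      rw [pow_succ, map_mul]
      ring
    constructor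
    · rw [Hs_succ]
      have expand : ∀ c : Fin m,
          MvPolynomial.X c * (Hs m (n+1) + MvPolynomial.C Polynomial.X * Ds m n c)
          = MvPolynomial.X c * Hs m (n+1)
            + ∑ i ∈ range (n+1), MvPolynomial.X c * (MvPolynomial.C Polynomial.X *
                (MvPolynomial.C ((Polynomial.X : Polynomial ℚ) ^ i) * Ek m (i+1) c * Hs m (n-i))) := by
        intro c
        rw [ihD c, Finset.mul_sum, mul_add, Finset.mul_sum]
      simp only [expand]
      rw [Finset.sum_add_distrib, Finset.sum_comm, Finset.sum_range_succ' _ (n+1), add_comm]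
      congr 1
      · exact Finset.sum_congr rfl piece2
      · rw [← Finset.sum_mul, ← MvPolynomial.esymm_one]
        simp
    · intro c'
      have piece2' : ∀ i ∈ range (n+1),
          (∑ c ∈ univ.filter (fun d => c' < d), MvPolynomial.X c * (MvPolynomial.C Polynomial.X *
            (MvPolynomial.C ((Polynomial.X : Polynomial ℚ) ^ i) * Ek m (i+1) c * Hs m (n-i))))
          = MvPolynomial.C ((Polynomial.X : Polynomial ℚ) ^ (i+1)) *
              Ek m (i+1+1) c' * Hs m (n+1-(i+1)) := by
        intro i _
        rw [Nat.succ_sub_succ, Ek_succ m (i+1) c', Finset.mul_sum, Finset.sum_mul]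
        apply Finset.sum_congr rfl
        intro c _
        rw [pow_succ, map_mul]
        ring
      rw [Ds_succ]
      have expand : ∀ c ∈ univ.filter (fun d => c' < d),
          MvPolynomial.X c * (Hs m (n+1) + MvPolynomial.C Polynomial.X * Ds m n c)
          = MvPolynomial.X c * Hs m (n+1)
            + ∑ i ∈ range (n+1), MvPolynomial.X c * (MvPolynomial.C Polynomial.X *
                (MvPolynomial.C ((Polynomial.X : Polynomial ℚ) ^ i) * Ek m (i+1) c * Hs m (n-i))) := by
        intro c _
        rw [ihD c, Finset.mul_sum, mul_add, Finset.mul_sum]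
      rw [Finset.sum_congr rfl expand, Finset.sum_add_distrib, Finset.sum_comm,
        Finset.sum_range_succ' _ (n+1), add_comm]
      congr 1
      · exact Finset.sum_congr rfl piece2'
      · rw [← Finset.sum_mul, ← Ek_one m c']
        simp


lemma sum_prod_bool (m n : ℕ) (g : Fin n → Bool → MvPolynomial (Fin m) (Polynomial ℚ)) :
    (∑ b : Fin n → Bool, ∏ j : Fin n, g j (b j)) = ∏ j : Fin n, ∑ y : Bool, g j y := by
  rw [show (univ : Finset (Fin n → Bool))
      = Fintype.piFinset (fun _ : Fin n => (univ : Finset Bool)) from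
    Fintype.piFinset_univ.symm]
  exact (Finset.prod_univ_sum (fun _ : Fin n => (univ : Finset Bool)) _).symm

lemma card_asc (m n : ℕ) (F : Fin n → Fin m) :
    ((univ : Finset (Fin n × Fin n)).filter (fun p => (p.1 : ℕ) + 1 = (p.2 : ℕ) ∧ F p.1 < F p.2)).card
    = ((univ : Finset (Fin n)).filter (fun j : Fin n => ((j:ℕ)+1 < n ∧ F j < F (nxt j)))).card := by
  apply Finset.card_bij' (fun p _ => p.1) (fun j _ => (j, nxt j))
  · intro p hp
    rw [Finset.mem_filter] at hp ⊢
    obtain ⟨-, h1, h2⟩ := hp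
    have hlt : (p.1 : ℕ) + 1 < n := h1 ▸ p.2.isLt
    have hnxt : nxt p.1 = p.2 := by
      apply Fin.ext
      simp [nxt, Nat.mod_eq_of_lt hlt, h1, Nat.mod_eq_of_lt p.2.isLt]
    exact ⟨Finset.mem_univ _, hlt, hnxt ▸ h2⟩
  · intro p hp
    rw [Finset.mem_filter] at hp
    obtain ⟨-, h1, h2⟩ := hp
    have hlt : (p.1 : ℕ) + 1 < n := h1 ▸ p.2.isLt
    have hnxt : nxt p.1 = p.2 := by
      apply Fin.ext
      simp [nxt, Nat.mod_eq_of_lt hlt, h1, Nat.mod_eq_of_lt p.2.isLt]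
    exact Prod.ext rfl hnxt
  · intro j hj
    rfl
  · intro j hj
    rw [Finset.mem_filter] at hj ⊢
    obtain ⟨-, h1, h2⟩ := hj
    have : ((nxt j : Fin n) : ℕ) = (j : ℕ) + 1 := by
      simp [nxt, Nat.mod_eq_of_lt h1]
    exact ⟨Finset.mem_univ _, this.symm, h2⟩

set_option maxHeartbeats 1000000 in
lemma path_eq_Hs (m n : ℕ) : pathLLTShifted m n = Hs m n := by
  rw [Hs, pathLLTShifted]
  rw [show (∑ G : Fin n → Fin m × Bool, wt m G)
      = ∑ p : (Fin n → Fin m) × (Fin n → Bool), wt m (fun j => (p.1 j, p.2 j)) from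
    (Fintype.sum_equiv ((Equiv.arrowProdEquivProdArrow (Fin n) (fun _ => Fin m) (fun _ => Bool)).symm)
      (fun p => wt m (fun j => (p.1 j, p.2 j))) (wt m) (fun p => rfl)).symm,
    Fintype.sum_prod_type]
  apply Finset.sum_congr rfl
  intro F _
  -- inner sum over booleans
  have step1 : ∀ b : Fin n → Bool, wt m (fun j => (F j, b j))
      = ∏ j : Fin n, (MvPolynomial.X (F j) *
        (if b j then
          (if ((j:ℕ)+1 < n ∧ F j < F (nxt j)) then MvPolynomial.C Polynomial.X else 0)
         else 1)) := fun b => rfl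
  simp only [step1]
  have step2 : (∑ b : Fin n → Bool, ∏ j : Fin n, (MvPolynomial.X (F j) *
        (if b j then
          (if ((j:ℕ)+1 < n ∧ F j < F (nxt j)) then MvPolynomial.C Polynomial.X else 0)
         else 1)))
      = ∏ j : Fin n, ∑ y : Bool, (MvPolynomial.X (F j) *
        (if y then
          (if ((j:ℕ)+1 < n ∧ F j < F (nxt j)) then MvPolynomial.C Polynomial.X else 0)
         else 1)) :=
    sum_prod_bool m n (fun j y => MvPolynomial.X (F j) *
      (if y then
        (if ((j:ℕ)+1 < n ∧ F j < F (nxt j)) then MvPolynomial.C Polynomial.X else 0)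
       else 1))
  rw [step2]
  have step3 : ∀ j : Fin n, (∑ y : Bool, (MvPolynomial.X (F j) *
        (if y then
          (if ((j:ℕ)+1 < n ∧ F j < F (nxt j)) then MvPolynomial.C Polynomial.X else 0)
         else 1) : MvPolynomial (Fin m) (Polynomial ℚ)))
      = MvPolynomial.X (F j) *
          (if ((j:ℕ)+1 < n ∧ F j < F (nxt j))
            then (MvPolynomial.C Polynomial.X + 1 : MvPolynomial (Fin m) (Polynomial ℚ))
            else 1) := by
    intro j
    rw [Fintype.sum_bool]
    simp only [if_pos rfl, if_true, if_neg (Bool.false_ne_true), mul_one]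
    split <;> ring
  have hsplit : (∏ j : Fin n, if ((j:ℕ)+1 < n ∧ F j < F (nxt j))
        then (MvPolynomial.C Polynomial.X + 1)
        else (1 : MvPolynomial (Fin m) (Polynomial ℚ)))
      = (MvPolynomial.C Polynomial.X + 1) ^
          ((univ.filter (fun j : Fin n => (j:ℕ)+1 < n ∧ F j < F (nxt j))).card) := by
    rw [Finset.prod_ite, Finset.prod_const, Finset.prod_const, one_pow, mul_one]
  rw [Finset.prod_congr rfl (fun j _ => step3 j), Finset.prod_mul_distrib, hsplit,
    ← card_asc m n F]
  rw [map_pow, map_add, map_one]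
  ring

/-- `Σ_n G_{P_n}(x; q+1) z^n = 1 / (1 - Σ_{i≥1} q^{i-1} e_i z^i)`,
stated denominator-multiplied in the power series ring (in `z`) over symmetric
polynomials in `m` variables, for every number of variables `m`. -/
theorem path_llt_generating_function (m : ℕ) :
    (1 - PowerSeries.mk (fun i =>
        if 1 ≤ i then
          MvPolynomial.C ((Polynomial.X : Polynomial ℚ) ^ (i - 1)) *
            MvPolynomial.esymm (Fin m) (Polynomial ℚ) i
        else 0)) *
      PowerSeries.mk (fun n => pathLLTShifted m n)
    = 1 := by
  ext k
  rw [sub_mul, one_mul, map_sub, PowerSeries.coeff_mul, PowerSeries.coeff_one]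
  simp only [PowerSeries.coeff_mk]
  rw [Finset.Nat.sum_antidiagonal_eq_sum_range_succ_mk]
  cases k with
  | zero =>
    rw [Finset.sum_range_one]
    simp [path_eq_Hs, Hs_zero]
  | succ n =>
    rw [Finset.sum_range_succ' _ (n+1)]
    have h0 : (if 1 ≤ 0 then
          MvPolynomial.C ((Polynomial.X : Polynomial ℚ) ^ (0-1)) *
            MvPolynomial.esymm (Fin m) (Polynomial ℚ) 0
        else 0) * pathLLTShifted m (n+1-0) = 0 := by norm_num
    rw [h0, add_zero]
    have hterm : ∀ i ∈ range (n+1),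
        (if 1 ≤ i+1 then
            MvPolynomial.C ((Polynomial.X : Polynomial ℚ) ^ (i+1-1)) *
              MvPolynomial.esymm (Fin m) (Polynomial ℚ) (i+1)
          else 0) * pathLLTShifted m (n+1-(i+1))
        = MvPolynomial.C ((Polynomial.X : Polynomial ℚ) ^ i) *
            MvPolynomial.esymm (Fin m) (Polynomial ℚ) (i+1) * Hs m (n-i) := by
      intro i _
      rw [if_pos (by omega : 1 ≤ i+1), Nat.add_sub_cancel, Nat.succ_sub_succ, path_eq_Hs]
    rw [Finset.sum_congr rfl hterm, path_eq_Hs, (main_ind m n).1]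
    simp
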